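/- arXiv:1409.0298 — 2 statements merged into one kernel-verified Lean document; each statement's English description precedes it below -/
import Mathlib

section
/- If every G-stopping time is an F-pseudo-stopping time, then F is immersed in G, i.e., every F-local martingale is a G-local martingale. (It suffices to show every uniformly integrable F-martingale is a uniformly integrable G-martingale, using the optional stopping characterization of martingales.) -/
open MeasureTheory Filter Function Set
open scoped ENNReal NNReal

noncomputable section

namespace PaperPST

variable {Ω : Type*}

/-- The value of the process `M` at the (possibly infinite) random time `τ`;
the time index `ℝ≥0∞` includes `∞ = ⊤`, so `M ⊤` plays the role of `M_∞`. -/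
def stoppedAt (M : ℝ≥0∞ → Ω → ℝ) (τ : Ω → ℝ≥0∞) : Ω → ℝ := fun ω => M (τ ω) ω

/-- `τ` is an `F`-pseudo-stopping time: every uniformly integrable `F`-martingale `M`
(formalized as a martingale indexed by `ℝ≥0∞`, i.e. closed by its terminal value `M ⊤`)
satisfies `E (M_τ) = E (M_0)`. -/
def IsPseudoStoppingTime {m : MeasurableSpace Ω} (F : Filtration ℝ≥0∞ m) (μ : Measure Ω)
    (τ : Ω → ℝ≥0∞) : Prop :=
  ∀ M : ℝ≥0∞ → Ω → ℝ, Martingale M F μ → (∀ t, Integrable (M t) μ) →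
    ∫ ω, stoppedAt M τ ω ∂μ = ∫ ω, M 0 ω ∂μ

/-- `M` is a local martingale w.r.t. `F`: there is a localizing sequence of stopping
times increasing to `∞` such that each stopped process is a martingale. -/
def IsLocalMartingale {m : MeasurableSpace Ω} (F : Filtration ℝ≥0∞ m) (μ : Measure Ω)
    (M : ℝ≥0∞ → Ω → ℝ) : Prop :=
  ∃ σ : ℕ → Ω → ℝ≥0∞, (∀ n, IsStoppingTime F (fun ω => ((σ n ω : ℝ≥0∞) : WithTop ℝ≥0∞))) ∧
    (∀ᵐ ω ∂μ, Tendsto (fun n => σ n ω) atTop (nhds ⊤)) ∧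
    ∀ n, Martingale (MeasureTheory.stoppedProcess M (fun ω => ((σ n ω : ℝ≥0∞) : WithTop ℝ≥0∞))) F μ

/-- `F` is immersed in `G`: every `F`-local martingale is a `G`-local martingale. -/
def Immersed {m : MeasurableSpace Ω} (F G : Filtration ℝ≥0∞ m) (μ : Measure Ω) : Prop :=
  ∀ M : ℝ≥0∞ → Ω → ℝ, IsLocalMartingale F μ M → IsLocalMartingale G μ M

/-- The raw increasing process `A = 1_{[τ,∞)}` associated with a random time `τ`. -/
def Aproc (τ : Ω → ℝ≥0∞) : ℝ≥0∞ → Ω → ℝ := fun t ω => if τ ω ≤ t then 1 else 0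

/-- The process `1_{[0,τ]}`. -/
def Bproc (τ : Ω → ℝ≥0∞) : ℝ≥0∞ → Ω → ℝ := fun t ω => if t ≤ τ ω then 1 else 0

/-- Left-limit process `V_{-}`, with the convention `V_{0-} = 0`. -/
def leftLimProc (V : ℝ≥0∞ → Ω → ℝ) : ℝ≥0∞ → Ω → ℝ :=
  fun t ω => if t = 0 then 0 else Function.leftLim (fun s => V s ω) t

/-- Jump process `ΔV_t = V_t - V_{t-}` (with `V_{0-} = 0`). -/
def jumpProc (V : ℝ≥0∞ → Ω → ℝ) : ℝ≥0∞ → Ω → ℝ :=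
  fun t ω => V t ω - leftLimProc V t ω

/-- `oV` is (a version of) the `F`-optional projection of the raw process `V`:
it is `F`-adapted and, for every `F`-stopping time `σ`,
`(oV)_σ = E[V_σ | F_σ]` a.s. (times are allowed to take the value `∞`). -/
def IsOptionalProjection {m : MeasurableSpace Ω} (F : Filtration ℝ≥0∞ m) (μ : Measure Ω)
    (V oV : ℝ≥0∞ → Ω → ℝ) : Prop :=
  Adapted F oV ∧ ∀ (σ : Ω → ℝ≥0∞) (hσ : IsStoppingTime F (fun ω => ((σ ω : ℝ≥0∞) : WithTop ℝ≥0∞))),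
    stoppedAt oV σ =ᵐ[μ] μ[stoppedAt V σ | hσ.measurableSpace]

/-- `Vo` is (a version of) the `F`-dual optional projection of the raw
finite-variation process `V`, where `oV` is the `F`-optional projection of `V`.
It is characterized as the `F`-adapted right-continuous finite-variation process
such that `N^V := oV - Vo` is a martingale vanishing at `0` and such that the jump
process of `Vo` is the optional projection of the jump process of `V`
(`°(ΔV) = ΔV°`). -/
structure IsDualOptionalProjection {m : MeasurableSpace Ω} (F : Filtration ℝ≥0∞ m)
    (μ : Measure Ω) (V oV Vo : ℝ≥0∞ → Ω → ℝ) : Prop where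
  adapted : Adapted F Vo
  rightCont : ∀ ω t, ContinuousWithinAt (fun s => Vo s ω) (Ici t) t
  finiteVariation : ∀ ω, ∃ W₁ W₂ : ℝ≥0∞ → ℝ, Monotone W₁ ∧ Monotone W₂ ∧
    ∀ t, Vo t ω = W₁ t - W₂ t
  martingale : Martingale (fun t ω => oV t ω - Vo t ω) F μ
  init : (fun ω => oV 0 ω - Vo 0 ω) =ᵐ[μ] 0
  jumpProj : ∀ (σ : Ω → ℝ≥0∞) (hσ : IsStoppingTime F (fun ω => ((σ ω : ℝ≥0∞) : WithTop ℝ≥0∞))),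
    stoppedAt (jumpProc Vo) σ =ᵐ[μ] μ[stoppedAt (jumpProc V) σ | hσ.measurableSpace]

/-- `τ` avoids all finite `F`-stopping times: `P(τ = σ < ∞) = 0` for every
`F`-stopping time `σ`. -/
def AvoidsStoppingTimes {m : MeasurableSpace Ω} (F : Filtration ℝ≥0∞ m) (μ : Measure Ω)
    (τ : Ω → ℝ≥0∞) : Prop :=
  ∀ σ : Ω → ℝ≥0∞, IsStoppingTime F (fun ω => ((σ ω : ℝ≥0∞) : WithTop ℝ≥0∞)) → μ {ω | τ ω = σ ω ∧ τ ω ≠ ⊤} = 0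

/-- `τ` is an `F`-honest time: for every `t > 0` there is an `F t`-measurable
random variable `τt` with `τ = τt` on `{τ < t}`. -/
def IsHonestTime {m : MeasurableSpace Ω} (F : Filtration ℝ≥0∞ m) (μ : Measure Ω)
    (τ : Ω → ℝ≥0∞) : Prop :=
  ∀ t : ℝ≥0∞, 0 < t → ∃ τt : Ω → ℝ≥0∞, Measurable[F t] τt ∧
    ∀ᵐ ω ∂μ, τ ω < t → τ ω = τt ω

/-- `τ` is equal to an `F`-stopping time on the event `{τ < ∞}`. -/
def EqualsStoppingTimeOnFinite {m : MeasurableSpace Ω} (F : Filtration ℝ≥0∞ m)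
    (μ : Measure Ω) (τ : Ω → ℝ≥0∞) : Prop :=
  ∃ σ : Ω → ℝ≥0∞, IsStoppingTime F (fun ω => ((σ ω : ℝ≥0∞) : WithTop ℝ≥0∞)) ∧ ∀ᵐ ω ∂μ, τ ω ≠ ⊤ → τ ω = σ ω


/-- If every `G`-stopping time is an `F`-pseudo-stopping time,
then `F` is immersed in `G`. -/
theorem pseudoStoppingTimes_imply_immersion
    {m : MeasurableSpace Ω} (μ : Measure Ω) [IsProbabilityMeasure μ]
    (F G : Filtration ℝ≥0∞ m) (hFG : ∀ t, F t ≤ G t)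
    (h : ∀ ν : Ω → ℝ≥0∞, IsStoppingTime G (fun ω => ((ν ω : ℝ≥0∞) : WithTop ℝ≥0∞)) → IsPseudoStoppingTime F μ ν) :
    Immersed F G μ := by
  -- Main step: every F-martingale (integrable at every time) is a G-martingale.
  have key : ∀ X : ℝ≥0∞ → Ω → ℝ, Martingale X F μ → (∀ t, Integrable (X t) μ) →
      Martingale X G μ := by
    intro X hX hXint
    have hadg : StronglyAdapted G X := fun t => (hX.1 t).mono (hFG t)
    refine ⟨hadg, ?_⟩
    intro s t hst
    haveI : IsFiniteMeasure (μ.trim (G.le s)) :=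
      ⟨by rw [trim_measurableSet_eq (G.le s) MeasurableSet.univ]; exact measure_lt_top μ _⟩
    refine (ae_eq_condExp_of_forall_setIntegral_eq (G.le s) (hXint t)
      (fun A hA _ => (hXint s).integrableOn) ?_
      ((hadg s).aestronglyMeasurable)).symm
    intro A hA _
    have hAm : MeasurableSet A := (G.le s) _ hA
    classical
    -- the two-valued G-stopping time
    set ν : Ω → ℝ≥0∞ := fun ω => if ω ∈ A then s else t with hν
    have hνst : IsStoppingTime G (fun ω => ((ν ω : ℝ≥0∞) : WithTop ℝ≥0∞)) := by
      intro u
      simp only [WithTop.coe_le_coe]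
      by_cases ht : t ≤ u
      · have hs : s ≤ u := le_trans hst ht
        have : {ω | ν ω ≤ u} = Set.univ := by
          ext ω; simp only [hν, Set.mem_setOf_eq, Set.mem_univ, iff_true]
          split <;> assumption
        rw [this]; exact @MeasurableSet.univ _ (G u)
      · by_cases hs : s ≤ u
        · have : {ω | ν ω ≤ u} = A := by
            ext ω; simp only [hν, Set.mem_setOf_eq]
            constructor
            · intro h'; by_contra hω; rw [if_neg hω] at h'; exact ht h'
            · intro hω; rw [if_pos hω]; exact hs
          rw [this]; exact (G.mono hs) _ hA
        · have : {ω | ν ω ≤ u} = ∅ := by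
            ext ω; simp only [hν, Set.mem_setOf_eq, Set.mem_empty_iff_false, iff_false]
            intro h'; split at h'
            · exact hs h'
            · exact ht h'
          rw [this]; exact @MeasurableSet.empty _ (G u)
    have h1 := h ν hνst X hX hXint
    have h2 := h (fun _ => t) (isStoppingTime_const G t) X hX hXint
    -- compute the integral of the stopped process
    have hdecomp : stoppedAt X ν = fun ω =>
        A.indicator (X s) ω + Aᶜ.indicator (X t) ω := by
      funext ω
      by_cases hω : ω ∈ A
      · simp [stoppedAt, hν, hω, Set.indicator_of_mem hω,
          Set.indicator_of_notMem (by simp [hω] : ω ∉ Aᶜ)]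
      · simp [stoppedAt, hν, hω, Set.indicator_of_notMem hω,
          Set.indicator_of_mem (by simp [hω] : ω ∈ Aᶜ)]
    have hint1 : Integrable (A.indicator (X s)) μ := (hXint s).indicator hAm
    have hint2 : Integrable (Aᶜ.indicator (X t)) μ := (hXint t).indicator hAm.compl
    have h1' : ∫ ω in A, X s ω ∂μ + ∫ ω in Aᶜ, X t ω ∂μ = ∫ ω, X 0 ω ∂μ := by
      calc ∫ ω in A, X s ω ∂μ + ∫ ω in Aᶜ, X t ω ∂μ
          = ∫ ω, (A.indicator (X s) ω + Aᶜ.indicator (X t) ω) ∂μ := by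
            rw [integral_add hint1 hint2, integral_indicator hAm,
              integral_indicator hAm.compl]
        _ = ∫ ω, stoppedAt X ν ω ∂μ := by rw [hdecomp]
        _ = ∫ ω, X 0 ω ∂μ := h1
    have h2' : ∫ ω in A, X t ω ∂μ + ∫ ω in Aᶜ, X t ω ∂μ = ∫ ω, X 0 ω ∂μ := by
      rw [integral_add_compl hAm (hXint t)]
      exact h2
    have := h1'.trans h2'.symm
    linarith
  -- transfer the localization
  intro M ⟨σ, hσ, htend, hmart⟩
  refine ⟨σ, fun n u => (hFG u) _ (hσ n u), htend, fun n => ?_⟩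
  exact key _ (hmart n) (fun t => (hmart n).integrable t)

end PaperPST
end
end

section
/- Any G-stopping time τ can be decomposed as τ = τ_c ∧ τ_d, where τ_c := τ·1_{D^c} + ∞·1_D and τ_d := τ·1_D + ∞·1_{D^c} with D := {ΔA°_τ > 0} ∈ G_τ; both τ_c and τ_d are G-stopping times, τ_c avoids all finite F-stopping times, and the graph of τ_d is contained in the union of the graphs of the jump times of A°. -/
open MeasureTheory Filter Function Set
open scoped ENNReal NNReal Topology

noncomputable section

namespace PaperPST

variable {Ω : Type*}

section StoppingTimeDecompositionAux
open TopologicalSpace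


/-- A countable dense "grid" in `ℝ≥0∞` containing `⊤`. -/
def dd : ℕ → ℝ≥0∞
  | 0 => ⊤
  | n + 1 => denseSeq ℝ≥0∞ n

lemma dd_dense {s u : ℝ≥0∞} (h : s < u) : ∃ n, dd n ∈ Ioo s u := by
  obtain ⟨n, hn⟩ := (denseRange_denseSeq ℝ≥0∞).exists_mem_open isOpen_Ioo (nonempty_Ioo.2 h)
  exact ⟨n + 1, hn⟩

/-- Right discretization grid. -/
def rgrid : ℕ → ℝ≥0∞ → ℝ≥0∞
  | 0, _ => ⊤
  | n + 1, s => min (rgrid n s) (if s ≤ dd n then dd n else ⊤)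

lemma le_rgrid (n : ℕ) (s : ℝ≥0∞) : s ≤ rgrid n s := by
  induction n with
  | zero => exact le_top
  | succ n ih =>
    refine le_min ih ?_
    split <;> simp_all

lemma rgrid_mem (n : ℕ) (s : ℝ≥0∞) : rgrid n s ∈ insert ⊤ (range dd) := by
  induction n with
  | zero => exact mem_insert _ _
  | succ n ih =>
    rcases le_total (rgrid n s) (if s ≤ dd n then dd n else ⊤) with h | h
    · rw [rgrid, min_eq_left h]; exact ih
    · rw [rgrid, min_eq_right h]
      split
      · exact Or.inr (mem_range_self n)
      · exact mem_insert _ _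

lemma rgrid_antitone (s : ℝ≥0∞) : Antitone fun n => rgrid n s :=
  antitone_nat_of_succ_le fun n => min_le_left _ _

lemma measurable_rgrid (n : ℕ) : Measurable (rgrid n) := by
  induction n with
  | zero => exact measurable_const
  | succ n ih =>
    refine ih.min (Measurable.ite ?_ measurable_const measurable_const)
    exact measurableSet_Iic

lemma rgrid_iInf (s : ℝ≥0∞) : ⨅ n, rgrid n s = s := by
  refine le_antisymm ?_ (le_iInf fun n => le_rgrid n s)
  by_contra h
  push_neg at h
  obtain ⟨n, hn⟩ := dd_dense h
  have h1 : (⨅ k, rgrid k s) ≤ dd n := by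
    refine (iInf_le _ (n + 1)).trans ?_
    rw [rgrid, if_pos hn.1.le]
    exact min_le_right _ _
  exact absurd hn.2 (not_lt.2 h1)

lemma rgrid_tendsto (s : ℝ≥0∞) : Tendsto (fun n => rgrid n s) atTop (𝓝 s) := by
  conv in 𝓝 s => rw [← rgrid_iInf s]
  exact tendsto_atTop_iInf (rgrid_antitone s)

/-- Left discretization grid. -/
def lgrid : ℕ → ℝ≥0∞ → ℝ≥0∞
  | 0, _ => 0
  | n + 1, s => max (lgrid n s) (if dd n < s then dd n else 0)

lemma lgrid_le (n : ℕ) (s : ℝ≥0∞) : lgrid n s ≤ s := by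
  induction n with
  | zero => exact zero_le
  | succ n ih =>
    refine max_le ih ?_
    split <;> simp_all [le_of_lt]

lemma lgrid_lt (n : ℕ) {s : ℝ≥0∞} (hs : s ≠ 0) : lgrid n s < s := by
  induction n with
  | zero => exact pos_iff_ne_zero.2 hs
  | succ n ih =>
    refine max_lt ih ?_
    split
    · assumption
    · exact pos_iff_ne_zero.2 hs

lemma lgrid_mem (n : ℕ) (s : ℝ≥0∞) : lgrid n s ∈ insert 0 (range dd) := by
  induction n with
  | zero => exact mem_insert _ _
  | succ n ih =>
    rcases le_total (lgrid n s) (if dd n < s then dd n else 0) with h | h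
    · rw [lgrid, max_eq_right h]
      split
      · exact Or.inr (mem_range_self n)
      · exact mem_insert _ _
    · rw [lgrid, max_eq_left h]; exact ih

lemma lgrid_mono (s : ℝ≥0∞) : Monotone fun n => lgrid n s :=
  monotone_nat_of_le_succ fun n => le_max_left _ _

lemma measurable_lgrid (n : ℕ) : Measurable (lgrid n) := by
  induction n with
  | zero => exact measurable_const
  | succ n ih =>
    refine ih.max (Measurable.ite ?_ measurable_const measurable_const)
    exact measurableSet_Ioi

lemma lgrid_iSup {s : ℝ≥0∞} (hs : s ≠ 0) : ⨆ n, lgrid n s = s := by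
  refine le_antisymm (iSup_le fun n => lgrid_le n s) ?_
  by_contra h
  push_neg at h
  obtain ⟨n, hn⟩ := dd_dense h
  have h1 : dd n ≤ ⨆ k, lgrid k s := by
    refine le_trans ?_ (le_iSup _ (n + 1))
    rw [lgrid, if_pos hn.2]
    exact le_max_right _ _
  exact absurd hn.1 (not_lt.2 h1)

lemma lgrid_tendsto {s : ℝ≥0∞} (hs : s ≠ 0) :
    Tendsto (fun n => lgrid n s) atTop (𝓝[<] s) := by
  refine tendsto_nhdsWithin_of_tendsto_nhds_of_eventually_within _ ?_
    (Eventually.of_forall fun n => lgrid_lt n hs)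
  conv in 𝓝 s => rw [← lgrid_iSup hs]
  exact tendsto_atTop_iSup (lgrid_mono s)

/-- Composition along a countable-range time change is measurable. -/
lemma measurable_eval_comp {α : Type*} [MeasurableSpace α] {A : ℝ≥0∞ → α → ℝ}
    {h : α → ℝ≥0∞} {S : Set ℝ≥0∞} (hS : S.Countable) (hmem : ∀ a, h a ∈ S)
    (hh : Measurable h) (hA : ∀ v ∈ S, Measurable fun a => A v a) :
    Measurable fun a => A (h a) a := by
  intro B hB
  have heq : (fun a => A (h a) a) ⁻¹' B = ⋃ v ∈ S, h ⁻¹' {v} ∩ (A v ⁻¹' B) := by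
    ext a
    simp only [mem_preimage, mem_iUnion, mem_inter_iff, mem_singleton_iff, exists_prop]
    constructor
    · intro hb; exact ⟨h a, hmem a, rfl, hb⟩
    · rintro ⟨v, _, hv2, hb⟩; rwa [hv2]
  rw [heq]
  exact MeasurableSet.biUnion hS fun v hv =>
    (hh (measurableSet_singleton v)).inter (hA v hv hB)

lemma jumpProc_Aproc (τ : Ω → ℝ≥0∞) (s : ℝ≥0∞) (ω : Ω) :
    jumpProc (Aproc τ) s ω = if τ ω = s then 1 else 0 := by
  rcases eq_or_ne s 0 with rfl | hs
  · simp [jumpProc, leftLimProc, Aproc, le_zero_iff]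
  · have hne : (𝓝[<] s).NeBot := nhdsWithin_Iio_self_neBot' ⟨0, pos_iff_ne_zero.mpr hs⟩
    rcases lt_or_ge (τ ω) s with hlt | hle
    · have hL : Function.leftLim (fun x => if τ ω ≤ x then (1:ℝ) else 0) s = 1 := by
        apply leftLim_eq_of_tendsto (h := hne)
        apply Tendsto.congr' _ (tendsto_const_nhds (x := (1:ℝ)))
        filter_upwards [Ioo_mem_nhdsLT hlt] with x hx
        simp [hx.1.le]
      simp [jumpProc, leftLimProc, if_neg hs, hL, Aproc, hlt.le, hlt.ne]
    · have hL : Function.leftLim (fun x => if τ ω ≤ x then (1:ℝ) else 0) s = 0 := by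
        apply leftLim_eq_of_tendsto (h := hne)
        apply Tendsto.congr' _ (tendsto_const_nhds (x := (0:ℝ)))
        filter_upwards [self_mem_nhdsWithin] with x hx
        have hx' : ¬ τ ω ≤ x := fun h => absurd (lt_of_le_of_lt h hx) (not_lt.2 hle)
        simp [hx']
      have hiff : τ ω ≤ s ↔ τ ω = s := ⟨fun h => le_antisymm h hle, fun h => h.le⟩
      simp only [jumpProc, leftLimProc, if_neg hs, hL, Aproc, sub_zero, hiff]

lemma progMeasurable_of_rightCont {m : MeasurableSpace Ω} (G : Filtration ℝ≥0∞ m)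
    (Ao : ℝ≥0∞ → Ω → ℝ) (hAd : ∀ v : ℝ≥0∞, StronglyMeasurable[G v] (Ao v))
    (hrc : ∀ ω t, ContinuousWithinAt (fun s => Ao s ω) (Ici t) t) :
    ProgMeasurable G Ao := by
  intro t
  letI : MeasurableSpace Ω := G t
  suffices h : Measurable fun p : Iic t × Ω => Ao ↑p.1 p.2 from h.stronglyMeasurable
  set S : Set ℝ≥0∞ := (fun v => min v t) '' (insert ⊤ (range dd)) with hS
  have hScount : S.Countable := (countable_range dd |>.insert ⊤).image _
  have hU : ∀ n : ℕ, Measurable fun p : Iic t × Ω => Ao (min (rgrid n ↑p.1) t) p.2 := by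
    intro n
    refine measurable_eval_comp (A := fun v p => Ao v p.2)
      (h := fun p : Iic t × Ω => min (rgrid n ↑p.1) t) hScount
      (fun p => mem_image_of_mem _ (rgrid_mem n _)) ?_ ?_
    · exact ((measurable_rgrid n).comp (measurable_subtype_coe.comp measurable_fst)).min
        measurable_const
    · rintro v ⟨w, -, rfl⟩
      exact ((hAd _).mono (G.mono (min_le_right w t))).measurable.comp measurable_snd
  refine measurable_of_tendsto_metrizable' atTop hU ?_
  rw [tendsto_pi_nhds]
  rintro ⟨⟨s, hs⟩, ω⟩
  have h1 : Tendsto (fun n => min (rgrid n s) t) atTop (𝓝 s) := by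
    refine tendsto_of_tendsto_of_tendsto_of_le_of_le tendsto_const_nhds (rgrid_tendsto s)
      (fun n => le_min (le_rgrid n s) hs) (fun n => min_le_left _ _)
  have h2 : Tendsto (fun n => min (rgrid n s) t) atTop (𝓝[≥] s) :=
    tendsto_nhdsWithin_of_tendsto_nhds_of_eventually_within _ h1
      (Eventually.of_forall fun n => le_min (le_rgrid n s) hs)
  exact Filter.Tendsto.comp (hrc ω s) h2

lemma progMeasurable_leftLim {m : MeasurableSpace Ω} (G : Filtration ℝ≥0∞ m)
    (Ao : ℝ≥0∞ → Ω → ℝ) (hAd : ∀ v : ℝ≥0∞, StronglyMeasurable[G v] (Ao v))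
    (hlim : ∀ ω (s : ℝ≥0∞), s ≠ 0 →
      Tendsto (fun x => Ao x ω) (𝓝[<] s) (𝓝 (leftLimProc Ao s ω))) :
    ProgMeasurable G (leftLimProc Ao) := by
  intro t
  letI : MeasurableSpace Ω := G t
  suffices h : Measurable fun p : Iic t × Ω => leftLimProc Ao ↑p.1 p.2 from h.stronglyMeasurable
  set S : Set ℝ≥0∞ := insert 0 (range dd) ∩ Iic t with hS
  have hScount : S.Countable := ((countable_range dd).insert 0).mono inter_subset_left
  have hU : ∀ n : ℕ, Measurable fun p : Iic t × Ω =>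
      if (p.1 : ℝ≥0∞) = 0 then (0 : ℝ) else Ao (lgrid n ↑p.1) p.2 := by
    intro n
    refine Measurable.ite ?_ measurable_const ?_
    · exact (measurable_subtype_coe.comp measurable_fst) (measurableSet_singleton 0)
    · refine measurable_eval_comp (A := fun v p => Ao v p.2)
        (h := fun p : Iic t × Ω => lgrid n ↑p.1) hScount
        (fun p => ⟨lgrid_mem n _, (lgrid_le n _).trans p.1.2⟩) ?_ ?_
      · exact (measurable_lgrid n).comp (measurable_subtype_coe.comp measurable_fst)
      · rintro v ⟨-, hv⟩
        exact ((hAd v).mono (G.mono hv)).measurable.comp measurable_snd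
  refine measurable_of_tendsto_metrizable' atTop hU ?_
  rw [tendsto_pi_nhds]
  rintro ⟨⟨s, hs⟩, ω⟩
  by_cases h0 : s = 0
  · simp only [h0, if_pos]
    have : leftLimProc Ao (0 : ℝ≥0∞) ω = 0 := by simp [leftLimProc]
    simp only [this]
    exact tendsto_const_nhds
  · have := (hlim ω s h0).comp (lgrid_tendsto h0)
    refine this.congr fun n => ?_
    simp only [comp_apply, if_neg h0]
end StoppingTimeDecompositionAux

/-- Any `G`-stopping time `τ` decomposes as `τ = τc ∧ τd`, where,
with `D := {ΔA°_τ > 0} ∈ G_τ`, `τc := τ·1_{Dᶜ} + ∞·1_D` and `τd := τ·1_D + ∞·1_{Dᶜ}`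
are `G`-stopping times, `τc` avoids all finite `F`-stopping times, and the graph of
`τd` is contained in the union of the graphs of the jump times of `A°`. -/
theorem stoppingTime_decomposition
    {m : MeasurableSpace Ω} (μ : Measure Ω) [IsProbabilityMeasure μ]
    (F G : Filtration ℝ≥0∞ m) (hFG : ∀ t, F t ≤ G t)
    (τ : Ω → ℝ≥0∞) (hτ : IsStoppingTime G (fun ω => ((τ ω : ℝ≥0∞) : WithTop ℝ≥0∞)))
    (oA Ao : ℝ≥0∞ → Ω → ℝ)
    (hoA : IsOptionalProjection F μ (Aproc τ) oA)
    (hAo : IsDualOptionalProjection F μ (Aproc τ) oA Ao) :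
    (∀ ω, τ ω = min (if 0 < jumpProc Ao (τ ω) ω then ⊤ else τ ω)
                    (if 0 < jumpProc Ao (τ ω) ω then τ ω else ⊤)) ∧
    MeasurableSet[hτ.measurableSpace] {ω | 0 < jumpProc Ao (τ ω) ω} ∧
    IsStoppingTime G (fun ω => (((if 0 < jumpProc Ao (τ ω) ω then ⊤ else τ ω : ℝ≥0∞)) : WithTop ℝ≥0∞)) ∧
    IsStoppingTime G (fun ω => (((if 0 < jumpProc Ao (τ ω) ω then τ ω else ⊤ : ℝ≥0∞)) : WithTop ℝ≥0∞)) ∧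
    AvoidsStoppingTimes F μ (fun ω => if 0 < jumpProc Ao (τ ω) ω then ⊤ else τ ω) ∧
    (∀ ω, (if 0 < jumpProc Ao (τ ω) ω then τ ω else ⊤) ≠ ⊤ →
      0 < jumpProc Ao ((if 0 < jumpProc Ao (τ ω) ω then τ ω else ⊤) : ℝ≥0∞) ω) := by
  classical
  have hAd : ∀ v, StronglyMeasurable[G v] (Ao v) := fun v => ((hAo.adapted v).mono (hFG v) le_rfl).stronglyMeasurable
  have hlim : ∀ ω (s : ℝ≥0∞), s ≠ 0 →
      Tendsto (fun x => Ao x ω) (𝓝[<] s) (𝓝 (leftLimProc Ao s ω)) := by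
    intro ω s hs
    obtain ⟨W₁, W₂, h₁, h₂, hW⟩ := hAo.finiteVariation ω
    have hne : (𝓝[<] s).NeBot := nhdsWithin_Iio_self_neBot' ⟨0, pos_iff_ne_zero.mpr hs⟩
    have ht : Tendsto (fun x => Ao x ω) (𝓝[<] s)
        (𝓝 (Function.leftLim W₁ s - Function.leftLim W₂ s)) :=
      ((h₁.tendsto_leftLim s).sub (h₂.tendsto_leftLim s)).congr fun x => (hW x).symm
    have heq : leftLimProc Ao s ω = Function.leftLim W₁ s - Function.leftLim W₂ s := by
      rw [leftLimProc, if_neg hs]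
      exact leftLim_eq_of_tendsto (h := hne) ht
    rw [heq]; exact ht
  have hprogJ : ProgMeasurable G (jumpProc Ao) :=
    IsStronglyProgressive.sub (progMeasurable_of_rightCont G Ao hAd hAo.rightCont)
      (progMeasurable_leftLim G Ao hAd hlim)
  have hD : MeasurableSet[hτ.measurableSpace] {ω | 0 < jumpProc Ao (τ ω) ω} :=
    measurable_stoppedValue hprogJ hτ measurableSet_Ioi
  have hDt : ∀ t, MeasurableSet[G t]
      ({ω | 0 < jumpProc Ao (τ ω) ω} ∩ {ω | τ ω ≤ t}) :=
    fun t => by simpa using ((hτ.measurableSet _).1 hD).2 t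
  have hτ' : ∀ t, MeasurableSet[G t] {ω | τ ω ≤ t} := fun t => by simpa using hτ t
  have hτc : IsStoppingTime G (fun ω => (((if 0 < jumpProc Ao (τ ω) ω then ⊤ else τ ω : ℝ≥0∞)) : WithTop ℝ≥0∞)) := by
    intro t
    simp only [WithTop.coe_le_coe]
    rcases eq_or_ne t ⊤ with rfl | ht
    · have : {ω | (if 0 < jumpProc Ao (τ ω) ω then (⊤:ℝ≥0∞) else τ ω) ≤ ⊤} = univ := by
        ext ω; simp
      rw [this]; exact MeasurableSet.univ
    · have hset : {ω | (if 0 < jumpProc Ao (τ ω) ω then (⊤:ℝ≥0∞) else τ ω) ≤ t} =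
          {ω | τ ω ≤ t} \ ({ω | 0 < jumpProc Ao (τ ω) ω} ∩ {ω | τ ω ≤ t}) := by
        ext ω
        by_cases hcω : 0 < jumpProc Ao (τ ω) ω
        · simp [hcω, top_le_iff, ht]
        · simp [hcω]
      rw [hset]; exact (hτ' t).diff (hDt t)
  have hτd : IsStoppingTime G (fun ω => (((if 0 < jumpProc Ao (τ ω) ω then τ ω else ⊤ : ℝ≥0∞)) : WithTop ℝ≥0∞)) := by
    intro t
    simp only [WithTop.coe_le_coe]
    rcases eq_or_ne t ⊤ with rfl | ht
    · have : {ω | (if 0 < jumpProc Ao (τ ω) ω then τ ω else (⊤:ℝ≥0∞)) ≤ ⊤} = univ := by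
        ext ω; simp
      rw [this]; exact MeasurableSet.univ
    · have hset : {ω | (if 0 < jumpProc Ao (τ ω) ω then τ ω else (⊤:ℝ≥0∞)) ≤ t} =
          {ω | 0 < jumpProc Ao (τ ω) ω} ∩ {ω | τ ω ≤ t} := by
        ext ω
        by_cases hcω : 0 < jumpProc Ao (τ ω) ω
        · simp [hcω]
        · simp [hcω, top_le_iff, ht]
      rw [hset]; exact hDt t
  refine ⟨?_, hD, hτc, hτd, ?_, ?_⟩
  · intro ω
    by_cases h : 0 < jumpProc Ao (τ ω) ω <;> simp [h]
  · -- avoids stopping times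
    intro σ hσ
    have hmle : hσ.measurableSpace ≤ m := hσ.measurableSpace_le
    have hτm : Measurable τ := measurable_of_Iic fun x => G.le x _ (hτ' x)
    have hσm : Measurable σ := measurable_of_Iic fun x => F.le x _ (by have := hσ x; simp only [WithTop.coe_le_coe] at this; exact this)
    set A : Set Ω := {ω | τ ω = σ ω} with hAdef
    have hAmeas : MeasurableSet A := by
      have : A = {ω | τ ω ≤ σ ω} ∩ {ω | σ ω ≤ τ ω} := by
        ext ω; simp [hAdef, le_antisymm_iff]
      rw [this]; exact (measurableSet_le hτm hσm).inter (measurableSet_le hσm hτm)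
    have hf_eq : stoppedAt (jumpProc (Aproc τ)) σ = A.indicator (fun _ => (1:ℝ)) := by
      funext ω
      rw [stoppedAt, jumpProc_Aproc]
      by_cases h : τ ω = σ ω
      · rw [if_pos h]
        exact (indicator_of_mem (show ω ∈ A from h) (fun _ => (1:ℝ))).symm
      · rw [if_neg h]
        exact (indicator_of_notMem (show ω ∉ A from h) (fun _ => (1:ℝ))).symm
    have hfint : Integrable (stoppedAt (jumpProc (Aproc τ)) σ) μ := by
      rw [hf_eq]; exact (integrable_const (1:ℝ)).indicator hAmeas
    set e := μ[stoppedAt (jumpProc (Aproc τ)) σ | hσ.measurableSpace] with hedef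
    have hge : stoppedAt (jumpProc Ao) σ =ᵐ[μ] e := hAo.jumpProj σ hσ
    have hsmeas' : MeasurableSet[hσ.measurableSpace] (e ⁻¹' Iic 0) := by
      rw [hedef]
      exact stronglyMeasurable_condExp.measurable measurableSet_Iic
    have hsmeas : MeasurableSet[hσ.measurableSpace] {ω | e ω ≤ 0} := hsmeas'
    have key : μ ({ω | e ω ≤ 0} ∩ A) = 0 := by
      have h1 : ∫ ω in {ω | e ω ≤ 0}, stoppedAt (jumpProc (Aproc τ)) σ ω ∂μ
          = ∫ ω in {ω | e ω ≤ 0}, e ω ∂μ :=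
        (setIntegral_condExp hmle hfint hsmeas).symm
      have h2 : ∫ ω in {ω | e ω ≤ 0}, e ω ∂μ ≤ 0 := by
        apply integral_nonpos_of_ae
        filter_upwards [ae_restrict_mem (hmle _ hsmeas)] with ω hω using hω
      have h3 : ∫ ω in {ω | e ω ≤ 0}, stoppedAt (jumpProc (Aproc τ)) σ ω ∂μ
          = (μ ({ω | e ω ≤ 0} ∩ A)).toReal := by
        rw [hf_eq, setIntegral_indicator hAmeas, setIntegral_const, smul_eq_mul, mul_one]; rfl
      have h4 : (μ ({ω | e ω ≤ 0} ∩ A)).toReal = 0 :=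
        le_antisymm (by rw [← h3, h1]; exact h2) ENNReal.toReal_nonneg
      exact (ENNReal.toReal_eq_zero_iff _).1 h4 |>.resolve_right (measure_ne_top μ _)
    have hnull : μ {ω | ¬ stoppedAt (jumpProc Ao) σ ω = e ω} = 0 := ae_iff.mp hge
    refine measure_mono_null ?_ (measure_union_null key hnull)
    intro ω hω
    obtain ⟨h1, h2⟩ := hω
    have h1' : (if 0 < jumpProc Ao (τ ω) ω then (⊤:ℝ≥0∞) else τ ω) = σ ω := h1
    have h2' : (if 0 < jumpProc Ao (τ ω) ω then (⊤:ℝ≥0∞) else τ ω) ≠ ⊤ := h2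
    have hccω : ¬ 0 < jumpProc Ao (τ ω) ω := fun hcc => h2' (if_pos hcc)
    have hτσ : τ ω = σ ω := by rwa [if_neg hccω] at h1'
    by_cases hgeω : stoppedAt (jumpProc Ao) σ ω = e ω
    · left
      refine ⟨?_, hτσ⟩
      have : stoppedAt (jumpProc Ao) σ ω = jumpProc Ao (τ ω) ω := by
        rw [stoppedAt, hτσ]
      rw [mem_setOf_eq, ← hgeω, this]
      exact not_lt.1 hccω
    · right; exact hgeω
  · intro ω h
    by_cases hcω : 0 < jumpProc Ao (τ ω) ω
    · rw [if_pos hcω] at h ⊢; exact hcω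
    · rw [if_neg hcω] at h; exact absurd rfl h

end PaperPST
end
end
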